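/- For all natural numbers m ≤ n and q ≥ m, the identity ∑ n!/(λ_1! ⋯ λ_m! (n-λ_1-...-λ_m)!) = binomial(n+m-1, m) holds, where the sum ranges over all nonnegative integer solutions of λ_1 + 2λ_2 + ... + mλ_m = m with λ_1 + ... + λ_m ≤ n. -/

import Mathlib

open Nat Finset

private def sigmaFstFiberEquiv {J : Type*} (β : J → Type*) (j : J) :
    {p : Σ i, β i // p.1 = j} ≃ β j where
  toFun p := p.2 ▸ p.1.2
  invFun b := ⟨⟨j, b⟩, rfl⟩
  left_inv := by rintro ⟨⟨i, b⟩, rfl⟩; rfl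
  right_inv b := rfl

private lemma exists_perm_comp {N : ℕ} {β : Type*} [DecidableEq β] (g g' : Fin N → β)
    (h : ∀ j, (univ.filter fun x => g x = j).card = (univ.filter fun x => g' x = j).card) :
    ∃ σ : Equiv.Perm (Fin N), g' ∘ σ = g := by
  have e : ∀ j, {x // g x = j} ≃ {x // g' x = j} := fun j =>
    Fintype.equivOfCardEq (by rw [Fintype.card_subtype, Fintype.card_subtype]; exact h j)
  refine ⟨(Equiv.sigmaFiberEquiv g).symm.trans
    ((Equiv.sigmaCongrRight e).trans (Equiv.sigmaFiberEquiv g')), ?_⟩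
  funext x
  exact (e (g x) ⟨x, rfl⟩).2

private lemma card_fiber_functions {N : ℕ} {β : Type*} [Fintype β] [DecidableEq β]
    (c : β → ℕ) (hc : ∑ j, c j = N) :
    (univ.filter fun g : Fin N → β => ∀ j, (univ.filter fun x => g x = j).card = c j).card
      * ∏ j, (c j)! = N ! := by
  classical
  have hcard : Fintype.card (Fin N) = Fintype.card (Σ j, Fin (c j)) := by
    simp [Fintype.card_sigma, hc]
  obtain ⟨e⟩ : Nonempty (Fin N ≃ Σ j, Fin (c j)) := ⟨Fintype.equivOfCardEq hcard⟩
  set g0 : Fin N → β := fun x => (e x).1 with hg0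
  have hfib0 : ∀ j, (univ.filter fun x => g0 x = j).card = c j := by
    intro j
    rw [← Fintype.card_subtype, ← Fintype.card_fin (c j)]
    exact Fintype.card_congr ((e.subtypeEquiv fun x => Iff.rfl).trans
      (sigmaFstFiberEquiv _ j))
  set S := univ.filter fun g : Fin N → β =>
    ∀ j, (univ.filter fun x => g x = j).card = c j with hS
  have hmaps : ∀ σ : Equiv.Perm (Fin N), g0 ∘ σ ∈ S := by
    intro σ
    simp only [hS, mem_filter, mem_univ, true_and]
    intro j
    rw [show (univ.filter fun x => (g0 ∘ σ) x = j) = univ.filter fun x => g0 (σ x) = j from rfl,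
      ← Fintype.card_subtype]
    rw [Fintype.card_congr (σ.subtypeEquiv (q := fun y => g0 y = j) fun x => Iff.rfl)]
    rw [Fintype.card_subtype]
    exact hfib0 j
  have key := Finset.card_eq_sum_card_fiberwise
    (f := fun σ : Equiv.Perm (Fin N) => g0 ∘ σ) (s := univ) (t := S) (fun σ _ => hmaps σ)
  rw [Finset.card_univ, Fintype.card_perm, Fintype.card_fin] at key
  have hstab := DomMulAct.stabilizer_card g0
  have hfibσ : ∀ g ∈ S, (univ.filter fun σ : Equiv.Perm (Fin N) => g0 ∘ σ = g).card
      = ∏ j, (c j)! := by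
    intro g hg
    simp only [hS, mem_filter, mem_univ, true_and] at hg
    obtain ⟨τ, hτ⟩ := exists_perm_comp g g0 (fun j => (hg j).trans (hfib0 j).symm)
    rw [← Fintype.card_subtype]
    have hequiv : {σ : Equiv.Perm (Fin N) // g0 ∘ σ = g} ≃
        {σ : Equiv.Perm (Fin N) // g0 ∘ σ = g0} := by
      refine Equiv.subtypeEquiv (Equiv.mulRight τ⁻¹) fun σ => ?_
      constructor
      · intro h
        funext x
        have h1 := congrFun h (τ⁻¹ x)
        have h2 := congrFun hτ (τ⁻¹ x)
        simp only [Function.comp_apply] at h1 h2 ⊢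
        show g0 (σ (τ⁻¹ x)) = g0 x
        rw [h1, ← h2, Equiv.Perm.inv_def, Equiv.apply_symm_apply]
      · intro h
        funext x
        have h1 := congrFun h (τ x)
        have h2 := congrFun hτ x
        simp only [Function.comp_apply, Equiv.coe_mulRight, Equiv.Perm.mul_apply,
          Equiv.Perm.inv_def, Equiv.symm_apply_apply] at h1 h2 ⊢
        rw [h1, h2]
    rw [Fintype.card_congr hequiv, hstab]
    refine Finset.prod_congr rfl fun j _ => ?_
    rw [Fintype.card_subtype, hfib0 j]
  rw [Finset.sum_congr rfl hfibσ, Finset.sum_const, smul_eq_mul] at key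
  exact key.symm
/-- For `m ≤ n` and `q ≥ m`, the sum of multinomial coefficients over all nonnegative
solutions of `λ₁ + 2λ₂ + … + mλₘ = m` with `λ₁ + … + λₘ ≤ n` equals `binomial (n+m-1) m`. -/
theorem multinomial_sum_identity (n m q : ℕ) (hmn : m ≤ n) (hq : m ≤ q) :
    ∑ lam ∈ (Fintype.piFinset fun _ : Fin m => Finset.range (m + 1)).filter
        (fun lam => ∑ i, (i.1 + 1) * lam i = m ∧ ∑ i, lam i ≤ n),
      n ! / ((∏ i, (lam i)!) * (n - ∑ i, lam i)!) =
    Nat.choose (n + m - 1) m := by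
  classical
  -- fiber-count function of g
  set fib : (Fin n → Fin (m + 1)) → Fin (m + 1) → ℕ :=
    fun g j => (univ.filter fun x => g x = j).card with hfib
  set P : (Fin n → Fin (m + 1)) → Fin m → ℕ := fun g i => fib g i.succ with hP
  -- total of fiber cards is n
  have hA : ∀ g : Fin n → Fin (m + 1), ∑ j, fib g j = n := by
    intro g
    rw [hfib, ← Finset.card_eq_sum_card_fiberwise (fun x _ => mem_univ (g x)),
      Finset.card_univ, Fintype.card_fin]
  -- sum of values grouped by fibers
  have hB : ∀ g : Fin n → Fin (m + 1),
      ∑ x, (g x : ℕ) = ∑ j : Fin (m + 1), (j : ℕ) * fib g j := by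
    intro g
    rw [← Finset.sum_fiberwise_of_maps_to (fun x _ => mem_univ (g x)) (fun x => (g x : ℕ))]
    refine Finset.sum_congr rfl fun j _ => ?_
    rw [Finset.sum_congr rfl (fun x hx => by
      rw [(mem_filter.mp hx).2]), Finset.sum_const, smul_eq_mul, mul_comm]
  -- the counting-function finset
  set Tf : Finset (Fin n → Fin (m + 1)) :=
    univ.filter (fun g => ∑ x, ((g x : ℕ)) = m) with hTf
  -- Step A : RHS = Tf.card
  have hcount_eq : ∀ (g : Fin n → Fin (m + 1)) (a : Fin n),
      (∑ x, Multiset.replicate ((g x : ℕ)) x).count a = (g a : ℕ) := by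
    intro g a
    rw [Multiset.count_sum']
    simp [Multiset.count_replicate]
  have eSym : {g : Fin n → Fin (m + 1) // ∑ x, ((g x : ℕ)) = m} ≃ Sym (Fin n) m := by
    refine
      { toFun := fun g => ⟨∑ x, Multiset.replicate ((g.1 x : ℕ)) x, ?_⟩
        invFun := fun s => ⟨fun x => ⟨s.1.count x, ?_⟩, ?_⟩
        left_inv := ?_, right_inv := ?_ }
    · rw [← Multiset.sum_count_eq_card (fun a _ => Finset.mem_univ a)]
      simp only [hcount_eq]
      exact g.2
    · exact lt_of_le_of_lt (le_of_le_of_eq (Multiset.count_le_card x s.1) s.2) (lt_succ_self m)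
    · show ∑ x, s.1.count x = m
      rw [Multiset.sum_count_eq_card (fun a _ => Finset.mem_univ a)]
      exact s.2
    · rintro ⟨g, hg⟩
      apply Subtype.ext
      funext x
      apply Fin.ext
      exact hcount_eq g x
    · rintro ⟨s, hs⟩
      apply Subtype.ext
      apply Multiset.ext.2
      intro a
      exact hcount_eq (fun x => (⟨s.count x, lt_of_le_of_lt (le_of_le_of_eq
        (Multiset.count_le_card x s) hs) (lt_succ_self m)⟩ : Fin (m + 1))) a
  have hRHS : Nat.choose (n + m - 1) m = Tf.card := by
    rw [hTf, ← Fintype.card_subtype, Fintype.card_congr eSym, Sym.card_sym_eq_choose,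
      Fintype.card_fin]
  -- Step B : partition Tf by profile
  have hsplit : ∀ g ∈ Tf, ∑ i : Fin m, (i.1 + 1) * P g i = m := by
    intro g hg
    have hgm : ∑ x, ((g x : ℕ)) = m := (mem_filter.mp hg).2
    have h := (hB g).symm.trans hgm
    rw [Fin.sum_univ_succ] at h
    simpa [Fin.val_succ, hP] using h
  have hmaps : ∀ g ∈ Tf, P g ∈ (Fintype.piFinset fun _ : Fin m => Finset.range (m + 1)).filter
      (fun lam => ∑ i, (i.1 + 1) * lam i = m ∧ ∑ i, lam i ≤ n) := by
    intro g hg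
    have hkey := hsplit g hg
    have hle : ∑ i : Fin m, P g i ≤ n := by
      have h1 := hA g
      rw [Fin.sum_univ_succ] at h1
      have h2 : ∑ i : Fin m, P g i = ∑ i : Fin m, fib g i.succ := rfl
      omega
    rw [mem_filter]
    refine ⟨Fintype.mem_piFinset.2 fun i => mem_range.2 ?_, hkey, hle⟩
    have h1 : (i.1 + 1) * P g i ≤ m := by
      have := Finset.single_le_sum (f := fun i : Fin m => (i.1 + 1) * P g i)
        (fun j _ => Nat.zero_le _) (mem_univ i)
      rw [hkey] at this
      exact this
    have h2 : P g i ≤ (i.1 + 1) * P g i := Nat.le_mul_of_pos_left _ (Nat.succ_pos _)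
    omega
  rw [hRHS, Finset.card_eq_sum_card_fiberwise hmaps]
  -- Step C : each fiber
  refine Finset.sum_congr rfl fun lam hlam => ?_
  obtain ⟨hlam0, hlam1, hlam2⟩ : lam ∈ _ ∧ (∑ i, (i.1 + 1) * lam i = m ∧ ∑ i, lam i ≤ n) :=
    mem_filter.mp hlam
  set c : Fin (m + 1) → ℕ := Fin.cases (n - ∑ i, lam i) lam with hc
  have hc0 : c 0 = n - ∑ i, lam i := rfl
  have hcs : ∀ i : Fin m, c i.succ = lam i := fun i => by simp [hc]
  have hsumc : ∑ j, c j = n := by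
    rw [Fin.sum_univ_succ, hc0]
    simp only [hcs]
    omega
  have hset : Tf.filter (fun g => P g = lam)
      = univ.filter (fun g => ∀ j, (univ.filter fun x => g x = j).card = c j) := by
    ext g
    simp only [hTf, mem_filter, mem_univ, true_and]
    constructor
    · rintro ⟨hgm, hPg⟩
      intro j
      induction j using Fin.cases with
      | zero =>
          have htot := hA g
          rw [Fin.sum_univ_succ] at htot
          have hsum : ∑ i : Fin m, fib g i.succ = ∑ i, lam i := by
            refine Finset.sum_congr rfl fun i _ => ?_
            rw [← hPg]
          show fib g 0 = c 0
          rw [hc0]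
          omega
      | succ i =>
          show fib g i.succ = c i.succ
          rw [hcs, ← hPg]
    · intro h
      have hPg : P g = lam := by
        funext i
        show fib g i.succ = lam i
        rw [← hcs]
        exact h i.succ
      refine ⟨?_, hPg⟩
      rw [hB, Fin.sum_univ_succ]
      have hfg : ∀ j, fib g j = c j := h
      simp only [hfg, hc0, hcs, Fin.val_succ, Fin.val_zero, zero_mul, zero_add]
      exact hlam1
  rw [hset]
  have hcount := card_fiber_functions c hsumc
  have hprod : ∏ j, (c j)! = (n - ∑ i, lam i)! * ∏ i, (lam i)! := by
    rw [Fin.prod_univ_succ, hc0]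
    simp only [hcs]
  refine Nat.div_eq_of_eq_mul_left ?_ ?_
  · exact Nat.mul_pos (Finset.prod_pos fun i _ => Nat.factorial_pos _) (Nat.factorial_pos _)
  · rw [← hcount, hprod]
    congr 1
    · congr!
    · exact mul_comm ((n - ∑ i, lam i)!) (∏ i, (lam i)!)
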